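/- If M is a matching in a graph G such that G admits no M-augmenting path of length at most 2k−1, then |M| ≥ (k/(k+1))·|M*| for every matching M* of G; in particular a matching with no augmenting path of length ≤ 3 is a 3/2-approximate maximum matching. -/

import Mathlib

set_option linter.unusedSectionVars false
set_option linter.unusedVariables false

/-- A matching: a set of edges of `G` that are pairwise vertex-disjoint. -/
def IsMatching {V : Type*} (G : SimpleGraph V) (M : Finset (Sym2 V)) : Prop :=
  (∀ e ∈ M, e ∈ G.edgeSet) ∧
  (∀ e ∈ M, ∀ f ∈ M, e ≠ f → ∀ x : V, x ∈ e → x ∉ f)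

/-- `v` is unmatched by `M`. -/
def Unmatched {V : Type*} (M : Finset (Sym2 V)) (v : V) : Prop := ∀ e ∈ M, v ∉ e

open SimpleGraph

namespace AugProof

variable {V : Type*} [Fintype V] [DecidableEq V] {G : SimpleGraph V}

lemma matching_unique {M : Finset (Sym2 V)} (hM : IsMatching G M) {e f : Sym2 V} {v : V}
    (he : e ∈ M) (hf : f ∈ M) (hv : v ∈ e) (hv' : v ∈ f) : e = f := by
  by_contra h
  exact hM.2 e he f hf h v hv hv'

lemma head_edge_end {u b v : V} {q : G.Walk b v} (hq : q.IsPath) (hu : u ∉ q.support)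
    (hv : v ∈ (s(u, b) : Sym2 V)) : q.edges = [] := by
  rcases Sym2.mem_iff.mp hv with rfl | rfl
  · exact absurd q.end_mem_support hu
  · rw [Walk.isPath_iff_eq_nil.mp hq]; rfl

lemma end_unique_edge : ∀ {u v : V} (p : G.Walk u v), p.IsPath →
    ∀ {e f : Sym2 V}, e ∈ p.edges → f ∈ p.edges → v ∈ e → v ∈ f → e = f := by
  intro u v p
  induction p with
  | nil => intro _ e f he; simp at he
  | cons h q ih =>
    intro hp e f he hf hv hv'
    rw [Walk.edges_cons, List.mem_cons] at he hf
    rw [Walk.cons_isPath_iff] at hp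
    rcases he with rfl | he
    · rcases hf with rfl | hf
      · rfl
      · rw [head_edge_end hp.1 hp.2 hv] at hf; simp at hf
    · rcases hf with rfl | hf
      · rw [head_edge_end hp.1 hp.2 hv'] at he; simp at he
      · exact ih hp.1 he hf hv hv'

def cov (M : Finset (Sym2 V)) : Finset V := Finset.univ.filter (fun v => ∃ e ∈ M, v ∈ e)

lemma mem_cov {M : Finset (Sym2 V)} {v : V} : v ∈ cov M ↔ ∃ e ∈ M, v ∈ e := by
  simp [cov]

lemma unmatched_iff {M : Finset (Sym2 V)} {v : V} : Unmatched M v ↔ v ∉ cov M := by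
  simp [Unmatched, mem_cov]

lemma card_cov {M : Finset (Sym2 V)} (hM : IsMatching G M) : (cov M).card = 2 * M.card := by
  have hcov : cov M = M.biUnion (fun e => Finset.univ.filter (· ∈ e)) := by
    ext v; simp [mem_cov]
  have hdisj : ∀ e ∈ M, ∀ f ∈ M, e ≠ f →
      Disjoint (Finset.univ.filter (· ∈ e)) (Finset.univ.filter (· ∈ f)) := by
    intro e he f hf hef
    simp only [Finset.disjoint_left, Finset.mem_filter]
    rintro x ⟨-, hxe⟩ ⟨-, hxf⟩
    exact hM.2 e he f hf hef x hxe hxf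
  have h2 : ∀ e ∈ M, (Finset.univ.filter (· ∈ e)).card = 2 := by
    intro e he
    have hdiag : ¬ e.IsDiag := G.not_isDiag_of_mem_edgeSet (hM.1 e he)
    induction e with
    | _ a b =>
      have hab : a ≠ b := by simpa [Sym2.mk_isDiag_iff] using hdiag
      have hfil : (Finset.univ.filter (· ∈ (s(a,b) : Sym2 V))) = {a, b} := by
        ext x; simp [Sym2.mem_iff]
      rw [hfil, Finset.card_insert_of_notMem (by simpa using hab), Finset.card_singleton]
  rw [hcov, Finset.card_biUnion hdisj, Finset.sum_congr rfl h2, Finset.sum_const,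
    smul_eq_mul, mul_comm]

lemma mem_getLast' {α : Type*} {l : List α} {a : α} (h : l.getLast? = some a) : a ∈ l := by
  have hne : l ≠ [] := by rintro rfl; simp at h
  rw [List.getLast?_eq_getLast_of_ne_nil hne] at h
  rw [← Option.some.inj h]
  exact List.getLast_mem hne

lemma walk_avoid {M M' : Finset (Sym2 V)} {x y : V} {p : G.Walk x y}
    (hclosed : ∀ z ∈ p.support, ∀ e : Sym2 V, (e ∈ M ∨ e ∈ M') → z ∈ e → e ∈ p.edges) :
    ∀ {a b : V} (q : G.Walk a b), (∀ e ∈ q.edges, e ∈ M ∨ e ∈ M') → a ∉ p.support →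
      ∀ z ∈ q.support, z ∉ p.support := by
  intro a b q
  induction q with
  | nil =>
    intro _ ha z hz
    rw [Walk.support_nil, List.mem_singleton] at hz; subst hz; exact ha
  | @cons a c b hadj q ih =>
    intro hedges ha z hz
    have hc : c ∉ p.support := by
      intro hcp
      have he : (s(a, c) : Sym2 V) ∈ p.edges :=
        hclosed c hcp _ (hedges _ (by simp)) (Sym2.mem_mk_right a c)
      exact ha (p.fst_mem_support_of_mem_edges he)
    rw [Walk.support_cons, List.mem_cons] at hz
    rcases hz with rfl | hz
    · exact ha
    · exact ih (fun e he => hedges e (by simp [he])) hc z hz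

lemma extend_altPath {M M' : Finset (Sym2 V)} (hM : IsMatching G M) (hM' : IsMatching G M')
    {u : V} (hu : Unmatched M u) :
    ∀ (n : ℕ) (b : Bool) (v : V) (p : G.Walk u v),
      p.IsPath → 1 ≤ p.length →
      List.Chain' (fun e f => (e ∈ M) ↔ (f ∉ M)) p.edges →
      (∀ e ∈ p.edges, e ∈ M ∨ e ∈ M') →
      (∀ z ∈ p.support, z ≠ v → ∀ e : Sym2 V, (e ∈ M ∨ e ∈ M') → z ∈ e → e ∈ p.edges) →
      (∀ z ∈ p.support, z ≠ u → z ≠ v → z ∈ cov M ∧ z ∈ cov M') →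
      (Odd p.length ↔ b = true) →
      (∃ el, p.edges.getLast? = some el ∧ v ∈ el ∧
        (b = true → el ∈ M' ∧ el ∉ M) ∧ (b = false → el ∈ M ∧ el ∉ M')) →
      Fintype.card V ≤ p.length + n →
      ∃ (w : V) (q : G.Walk u w),
        q.IsPath ∧ 1 ≤ q.length ∧
        List.Chain' (fun e f => (e ∈ M) ↔ (f ∉ M)) q.edges ∧
        (∀ e ∈ q.edges, e ∈ M ∨ e ∈ M') ∧
        (∀ z ∈ q.support, ∀ e : Sym2 V, (e ∈ M ∨ e ∈ M') → z ∈ e → e ∈ q.edges) ∧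
        (∀ z ∈ q.support, z ≠ u → z ≠ w → z ∈ cov M ∧ z ∈ cov M') ∧
        ((Unmatched M w ∧ Odd q.length) ∨ (w ∈ cov M ∧ w ∉ cov M')) := by
  intro n
  induction n with
  | zero =>
    intro b v p hp hlen _ _ _ _ _ _ hcard
    exact absurd hp.length_lt (by omega)
  | succ n ih =>
    intro b v p hp hlen hchain hedges hsemi hcovz hpar hlast hcard
    obtain ⟨el, hlast?, hvel, hbt, hbf⟩ := hlast
    have helmem : el ∈ p.edges := mem_getLast' hlast?
    cases b with
    | true =>
      obtain ⟨helM', helM⟩ := hbt rfl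
      by_cases hvM : ∃ e ∈ M, v ∈ e
      · obtain ⟨e, heM, hve⟩ := hvM
        obtain ⟨x, rfl⟩ := Sym2.mem_iff_exists.mp hve
        have hadj : G.Adj v x := (G.mem_edgeSet).mp (hM.1 _ heM)
        have heM' : (s(v,x) : Sym2 V) ∉ M' := by
          intro hmem
          have := matching_unique hM' hmem helM' (Sym2.mem_mk_left v x) hvel
          rw [this] at heM; exact helM heM
        have hxs : x ∉ p.support := by
          intro hxp
          have hxv : x ≠ v := hadj.ne'
          have h1 : (s(v,x) : Sym2 V) ∈ p.edges :=
            hsemi x hxp hxv _ (Or.inl heM) (Sym2.mem_mk_right v x)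
          have h2 := end_unique_edge p hp h1 helmem (Sym2.mem_mk_left v x) hvel
          rw [h2] at heM; exact helM heM
        have hpodd : Odd p.length := hpar.mpr rfl
        refine ih false x (p.concat hadj) ?_ ?_ ?_ ?_ ?_ ?_ ?_ ?_ ?_
        · rw [Walk.isPath_def, Walk.support_concat,
            List.nodup_append]
          refine ⟨hp.support_nodup, List.nodup_singleton x, ?_⟩
          intro z hz b hz' hzb
          rw [List.mem_singleton] at hz'
          subst hz'
          exact hxs (hzb ▸ hz)
        · rw [Walk.length_concat]; omega
        · rw [Walk.edges_concat, List.concat_eq_append]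
          refine List.IsChain.append hchain (List.isChain_singleton _) ?_
          intro a ha c hc
          rw [hlast?, Option.mem_some_iff] at ha
          rw [List.head?_cons, Option.mem_some_iff] at hc
          subst ha; subst hc
          exact iff_of_false helM (not_not_intro heM)
        · intro e he
          rw [Walk.edges_concat, List.concat_eq_append, List.mem_append] at he
          rcases he with he | he
          · exact hedges e he
          · rw [List.mem_singleton] at he; subst he; exact Or.inl heM
        · intro z hz hzx e' he' hze'
          rw [Walk.support_concat, List.mem_append] at hz
          rcases hz with hz | hz
          swap
          · exact absurd (List.mem_singleton.mp hz) hzx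
          rw [Walk.edges_concat, List.concat_eq_append]
          by_cases hzv : z = v
          · subst hzv
            rcases he' with he' | he'
            · have : e' = s(z,x) := matching_unique hM he' heM hze' (Sym2.mem_mk_left z x)
              rw [this]; simp
            · have : e' = el := matching_unique hM' he' helM' hze' hvel
              rw [this]; exact List.mem_append_left _ helmem
          · exact List.mem_append_left _ (hsemi z hz hzv e' he' hze')
        · intro z hz hzu hzx
          rw [Walk.support_concat, List.mem_append] at hz
          rcases hz with hz | hz
          swap
          · exact absurd (List.mem_singleton.mp hz) hzx
          by_cases hzv : z = v
          · subst hzv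
            exact ⟨mem_cov.mpr ⟨s(z,x), heM, Sym2.mem_mk_left z x⟩,
              mem_cov.mpr ⟨el, helM', hvel⟩⟩
          · exact hcovz z hz hzu hzv
        · rw [Walk.length_concat]
          simp only [Nat.odd_add_one]
          simp [hpodd]
        · refine ⟨s(v,x), ?_, Sym2.mem_mk_right v x, by simp, fun _ => ⟨heM, heM'⟩⟩
          rw [Walk.edges_concat, List.concat_eq_append]
          exact List.getLast?_concat
        · rw [Walk.length_concat]; omega
      · refine ⟨v, p, hp, hlen, hchain, hedges, ?_, hcovz,
          Or.inl ⟨fun e he hv => hvM ⟨e, he, hv⟩, hpar.mpr rfl⟩⟩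
        intro z hz e he hze
        by_cases hzv : z = v
        · subst hzv
          rcases he with he | he
          · exact absurd ⟨e, he, hze⟩ hvM
          · have : e = el := matching_unique hM' he helM' hze hvel
            rw [this]; exact helmem
        · exact hsemi z hz hzv e he hze
    | false =>
      obtain ⟨helM, helM'⟩ := hbf rfl
      by_cases hvM' : ∃ e ∈ M', v ∈ e
      · obtain ⟨e, heM', hve⟩ := hvM'
        obtain ⟨x, rfl⟩ := Sym2.mem_iff_exists.mp hve
        have hadj : G.Adj v x := (G.mem_edgeSet).mp (hM'.1 _ heM')
        have heM : (s(v,x) : Sym2 V) ∉ M := by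
          intro hmem
          have := matching_unique hM hmem helM (Sym2.mem_mk_left v x) hvel
          rw [this] at heM'; exact helM' heM'
        have hxs : x ∉ p.support := by
          intro hxp
          have hxv : x ≠ v := hadj.ne'
          have h1 : (s(v,x) : Sym2 V) ∈ p.edges :=
            hsemi x hxp hxv _ (Or.inr heM') (Sym2.mem_mk_right v x)
          have h2 := end_unique_edge p hp h1 helmem (Sym2.mem_mk_left v x) hvel
          rw [h2] at heM'; exact helM' heM'
        have hpev : ¬ Odd p.length := fun ho => by simpa using hpar.mp ho
        refine ih true x (p.concat hadj) ?_ ?_ ?_ ?_ ?_ ?_ ?_ ?_ ?_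
        · rw [Walk.isPath_def, Walk.support_concat,
            List.nodup_append]
          refine ⟨hp.support_nodup, List.nodup_singleton x, ?_⟩
          intro z hz b hz' hzb
          rw [List.mem_singleton] at hz'
          subst hz'
          exact hxs (hzb ▸ hz)
        · rw [Walk.length_concat]; omega
        · rw [Walk.edges_concat, List.concat_eq_append]
          refine List.IsChain.append hchain (List.isChain_singleton _) ?_
          intro a ha c hc
          rw [hlast?, Option.mem_some_iff] at ha
          rw [List.head?_cons, Option.mem_some_iff] at hc
          subst ha; subst hc
          exact iff_of_true helM heM
        · intro e he
          rw [Walk.edges_concat, List.concat_eq_append, List.mem_append] at he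
          rcases he with he | he
          · exact hedges e he
          · rw [List.mem_singleton] at he; subst he; exact Or.inr heM'
        · intro z hz hzx e' he' hze'
          rw [Walk.support_concat, List.mem_append] at hz
          rcases hz with hz | hz
          swap
          · exact absurd (List.mem_singleton.mp hz) hzx
          rw [Walk.edges_concat, List.concat_eq_append]
          by_cases hzv : z = v
          · subst hzv
            rcases he' with he' | he'
            · have : e' = el := matching_unique hM he' helM hze' hvel
              rw [this]; exact List.mem_append_left _ helmem
            · have : e' = s(z,x) := matching_unique hM' he' heM' hze' (Sym2.mem_mk_left z x)
              rw [this]; simp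
          · exact List.mem_append_left _ (hsemi z hz hzv e' he' hze')
        · intro z hz hzu hzx
          rw [Walk.support_concat, List.mem_append] at hz
          rcases hz with hz | hz
          swap
          · exact absurd (List.mem_singleton.mp hz) hzx
          by_cases hzv : z = v
          · subst hzv
            exact ⟨mem_cov.mpr ⟨el, helM, hvel⟩,
              mem_cov.mpr ⟨s(z,x), heM', Sym2.mem_mk_left z x⟩⟩
          · exact hcovz z hz hzu hzv
        · rw [Walk.length_concat]
          simp only [Nat.odd_add_one]
          simp [hpev]
        · refine ⟨s(v,x), ?_, Sym2.mem_mk_right v x, fun _ => ⟨heM', heM⟩, by simp⟩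
          rw [Walk.edges_concat, List.concat_eq_append]
          exact List.getLast?_concat
        · rw [Walk.length_concat]; omega
      · refine ⟨v, p, hp, hlen, hchain, hedges, ?_, hcovz,
          Or.inr ⟨mem_cov.mpr ⟨el, helM, hvel⟩, fun hc => hvM' (mem_cov.mp hc)⟩⟩
        intro z hz e he hze
        by_cases hzv : z = v
        · subst hzv
          rcases he with he | he
          · have : e = el := matching_unique hM he helM hze hvel
            rw [this]; exact helmem
          · exact absurd ⟨e, he, hze⟩ hvM'
        · exact hsemi z hz hzv e he hze

lemma exists_altPath {M M' : Finset (Sym2 V)} (hM : IsMatching G M) (hM' : IsMatching G M')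
    {u : V} (hu : Unmatched M u) (hu' : u ∈ cov M') :
    ∃ (w : V) (p : G.Walk u w),
      p.IsPath ∧ 1 ≤ p.length ∧
      List.Chain' (fun e f => (e ∈ M) ↔ (f ∉ M)) p.edges ∧
      (∀ e ∈ p.edges, e ∈ M ∨ e ∈ M') ∧
      (∀ z ∈ p.support, ∀ e : Sym2 V, (e ∈ M ∨ e ∈ M') → z ∈ e → e ∈ p.edges) ∧
      (∀ z ∈ p.support, z ≠ u → z ≠ w → z ∈ cov M ∧ z ∈ cov M') ∧
      ((Unmatched M w ∧ Odd p.length) ∨ (w ∈ cov M ∧ w ∉ cov M')) := by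
  obtain ⟨f0, hf0M', huf0⟩ := mem_cov.mp hu'
  obtain ⟨x, rfl⟩ := Sym2.mem_iff_exists.mp huf0
  have hadj : G.Adj u x := (G.mem_edgeSet).mp (hM'.1 _ hf0M')
  have hf0M : (s(u,x) : Sym2 V) ∉ M := fun hmem => hu _ hmem (Sym2.mem_mk_left u x)
  refine extend_altPath hM hM' hu (Fintype.card V) true x (Walk.cons hadj Walk.nil)
    ?_ ?_ ?_ ?_ ?_ ?_ ?_ ?_ ?_
  · rw [Walk.cons_isPath_iff]
    exact ⟨Walk.IsPath.nil, by simp [hadj.ne]⟩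
  · simp
  · exact List.isChain_singleton _
  · intro e he
    simp only [Walk.edges_cons, Walk.edges_nil, List.mem_singleton] at he
    subst he; exact Or.inr hf0M'
  · intro z hz hzx e he hze
    have hz' : z = u ∨ z = x := by simpa using hz
    rcases hz' with rfl | rfl
    swap
    · exact absurd rfl hzx
    rcases he with he | he
    · exact absurd hze (hu _ he)
    · have : e = s(z,x) := matching_unique hM' he hf0M' hze (Sym2.mem_mk_left z x)
      rw [this]; simp
  · intro z hz hzu hzx
    have hz' : z = u ∨ z = x := by simpa using hz
    rcases hz' with rfl | rfl
    · exact absurd rfl hzu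
    · exact absurd rfl hzx
  · simp
  · exact ⟨s(u,x), by simp, Sym2.mem_mk_right u x, fun _ => ⟨hf0M', hf0M⟩, by simp⟩
  · simp


end AugProof

open AugProof in
/-- If `M` is a matching in a graph `G` such that `G` admits no `M`-augmenting path of
length at most `2k−1` (a simple path between two distinct unmatched vertices whose edges
alternate w.r.t. membership in `M`), then `k·|M*| ≤ (k+1)·|M|`, i.e.
`|M| ≥ (k/(k+1))·|M*|`, for every matching `M*` of `G`. -/
theorem stmt2 {V : Type*} [Fintype V] [DecidableEq V] (G : SimpleGraph V)
    (M : Finset (Sym2 V)) (hM : IsMatching G M)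
    (k : ℕ) (hk : 1 ≤ k)
    (hno : ¬ ∃ (u v : V) (p : G.Walk u v), u ≠ v ∧ Unmatched M u ∧ Unmatched M v ∧
      p.IsPath ∧ List.Chain' (fun e f => (e ∈ M) ↔ (f ∉ M)) p.edges ∧
      p.length ≤ 2 * k - 1) :
    ∀ M' : Finset (Sym2 V), IsMatching G M' → k * M'.card ≤ (k + 1) * M.card := by
  classical
  intro M' hM'
  set A : Finset V := cov M' \ cov M with hAdef
  have hex : ∀ u ∈ A, ∃ (w : V) (p : G.Walk u w),
      p.IsPath ∧ 1 ≤ p.length ∧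
      List.Chain' (fun e f => (e ∈ M) ↔ (f ∉ M)) p.edges ∧
      (∀ e ∈ p.edges, e ∈ M ∨ e ∈ M') ∧
      (∀ z ∈ p.support, ∀ e : Sym2 V, (e ∈ M ∨ e ∈ M') → z ∈ e → e ∈ p.edges) ∧
      (∀ z ∈ p.support, z ≠ u → z ≠ w → z ∈ cov M ∧ z ∈ cov M') ∧
      ((Unmatched M w ∧ Odd p.length) ∨ (w ∈ cov M ∧ w ∉ cov M')) := by
    intro u hu
    have hu' := Finset.mem_sdiff.mp hu
    exact exists_altPath hM hM' (unmatched_iff.mpr hu'.2) hu'.1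
  choose W P hP using hex
  have hPath : ∀ u (hu : u ∈ A), (P u hu).IsPath := fun u hu => (hP u hu).1
  have hLen : ∀ u (hu : u ∈ A), 1 ≤ (P u hu).length := fun u hu => (hP u hu).2.1
  have hChain := fun u hu => (hP u hu).2.2.1
  have hEdges := fun u hu => (hP u hu).2.2.2.1
  have hClosed := fun u hu => (hP u hu).2.2.2.2.1
  have hCov := fun u hu => (hP u hu).2.2.2.2.2.1
  have hEnd := fun u hu => (hP u hu).2.2.2.2.2.2
  -- endpoints are distinct from starts
  have hWne : ∀ u (hu : u ∈ A), W u hu ≠ u := by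
    intro u hu h
    have hcopy : ((P u hu).copy rfl h).IsPath := by
      rw [Walk.isPath_copy]; exact hPath u hu
    have hnil := Walk.isPath_iff_eq_nil.mp hcopy
    have hl0 : (P u hu).length = 0 := by
      have := congrArg Walk.length hnil
      simpa using this
    have := hLen u hu
    omega
  -- unmatched vertices on a path are endpoints
  have hsupp_unm : ∀ u (hu : u ∈ A), ∀ z ∈ (P u hu).support, z ∉ cov M →
      z = u ∨ z = W u hu := by
    intro u hu z hz hzc
    by_contra hcon
    push_neg at hcon
    exact hzc ((hCov u hu z hz hcon.1 hcon.2).1)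
  -- avoidance
  have havoid : ∀ u1 (h1 : u1 ∈ A), ∀ u2 (h2 : u2 ∈ A), u2 ≠ u1 → u2 ≠ W u1 h1 →
      ∀ z ∈ (P u2 h2).support, z ∉ (P u1 h1).support := by
    intro u1 h1 u2 h2 hne hneW
    have hu2nc : u2 ∉ cov M := (Finset.mem_sdiff.mp h2).2
    have hstart : u2 ∉ (P u1 h1).support := by
      intro hmem
      rcases hsupp_unm u1 h1 u2 hmem hu2nc with h | h
      exacts [hne h, hneW h]
    exact walk_avoid (hClosed u1 h1) (P u2 h2) (hEdges u2 h2) hstart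
  -- long augmenting paths
  have hlong : ∀ u (hu : u ∈ A), Unmatched M (W u hu) → 2 * k + 1 ≤ (P u hu).length := by
    intro u hu hw
    have hodd : Odd (P u hu).length := by
      rcases hEnd u hu with ⟨_, ho⟩ | ⟨hc, _⟩
      · exact ho
      · exact absurd hc (unmatched_iff.mp hw)
    have hgt : ¬ ((P u hu).length ≤ 2 * k - 1) := by
      intro hle
      exact hno ⟨u, W u hu, P u hu, (hWne u hu).symm,
        unmatched_iff.mpr (Finset.mem_sdiff.mp hu).2, hw, hPath u hu, hChain u hu, hle⟩
    obtain ⟨m, hm⟩ := hodd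
    omega
  -- global functions
  set E : V → V := fun u => if h : u ∈ A then W u h else u with hEdef'
  set I : V → Finset V := fun u =>
    if h : u ∈ A then (P u h).support.toFinset \ {u, W u h} else ∅ with hIdef'
  have hEdef : ∀ u (hu : u ∈ A), E u = W u hu := by
    intro u hu; rw [hEdef']; exact dif_pos hu
  have hIdef : ∀ u (hu : u ∈ A),
      I u = (P u hu).support.toFinset \ {u, W u hu} := by
    intro u hu; rw [hIdef']; exact dif_pos hu
  set S : Finset V := cov M ∩ cov M' with hSdef
  set B : Finset V := A.filter (fun u => Unmatched M (E u)) with hBdef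
  set C : Finset V := A \ B with hCdef
  have hBA : B ⊆ A := Finset.filter_subset _ _
  -- interiors: size and location
  have hIcard : ∀ u ∈ B, 2 * k ≤ (I u).card := by
    intro u huB
    have hu : u ∈ A := hBA huB
    have hw : Unmatched M (W u hu) := by
      have := (Finset.mem_filter.mp huB).2
      rwa [hEdef u hu] at this
    have hll := hlong u hu hw
    have hsub : ({u, W u hu} : Finset V) ⊆ (P u hu).support.toFinset := by
      intro z hz
      rcases Finset.mem_insert.mp hz with rfl | hz
      · exact List.mem_toFinset.mpr (Walk.start_mem_support _)
      · rw [Finset.mem_singleton] at hz; subst hz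
        exact List.mem_toFinset.mpr (Walk.end_mem_support _)
    have hcard1 : (P u hu).support.toFinset.card = (P u hu).length + 1 := by
      rw [List.toFinset_card_of_nodup (hPath u hu).support_nodup, Walk.length_support]
    have hpair : ({u, W u hu} : Finset V).card = 2 := by
      rw [Finset.card_insert_of_notMem
          (Finset.notMem_singleton.mpr (fun h => hWne u hu h.symm)),
        Finset.card_singleton]
    rw [hIdef u hu, Finset.card_sdiff_of_subset hsub, hcard1, hpair]
    omega
  have hIS : ∀ u (hu : u ∈ A), I u ⊆ S := by
    intro u hu z hz
    rw [hIdef u hu, Finset.mem_sdiff] at hz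
    obtain ⟨hz1, hz2⟩ := hz
    simp only [Finset.mem_insert, Finset.mem_singleton, not_or] at hz2
    have := hCov u hu z (List.mem_toFinset.mp hz1) hz2.1 hz2.2
    rw [hSdef]
    exact Finset.mem_inter.mpr this
  have hIsupp : ∀ u (hu : u ∈ A), ∀ z ∈ I u, z ∈ (P u hu).support := by
    intro u hu z hz
    rw [hIdef u hu, Finset.mem_sdiff] at hz
    exact List.mem_toFinset.mp hz.1
  -- disjointness of interiors for essentially different starts
  have hdisj : ∀ u1 (h1 : u1 ∈ A), ∀ u2 (h2 : u2 ∈ A), u2 ≠ u1 → u2 ≠ E u1 →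
      ∀ x, x ∈ I u1 → x ∈ I u2 → False := by
    intro u1 h1 u2 h2 hne hneE x hx1 hx2
    rw [hEdef u1 h1] at hneE
    exact havoid u1 h1 u2 h2 hne hneE x (hIsupp u2 h2 x hx2) (hIsupp u1 h1 x hx1)
  -- C maps injectively into cov M \ cov M'
  have hCmaps : ∀ u ∈ C, E u ∈ cov M \ cov M' := by
    intro u huC
    rw [hCdef, Finset.mem_sdiff] at huC
    obtain ⟨huA, hnB⟩ := huC
    have hnotun : ¬ Unmatched M (E u) := by
      intro hun
      exact hnB (Finset.mem_filter.mpr ⟨huA, hun⟩)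
    rcases hEnd u huA with ⟨hunm, _⟩ | ⟨h1, h2⟩
    · exact absurd (by rwa [hEdef u huA]) hnotun
    · rw [hEdef u huA]
      exact Finset.mem_sdiff.mpr ⟨h1, h2⟩
  have hCinj : Set.InjOn E ↑C := by
    intro u1 h1' u2 h2' heq
    rw [Finset.mem_coe] at h1' h2'
    by_contra hne
    have h1A : u1 ∈ A := (Finset.mem_sdiff.mp h1').1
    have h2A : u2 ∈ A := (Finset.mem_sdiff.mp h2').1
    have hneW : u2 ≠ W u1 h1A := by
      intro h
      have hE1 : E u1 ∈ cov M := (Finset.mem_sdiff.mp (hCmaps u1 h1')).1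
      rw [hEdef u1 h1A] at hE1
      exact (Finset.mem_sdiff.mp h2A).2 (h ▸ hE1)
    have := havoid u1 h1A u2 h2A (fun h => hne h.symm) hneW (W u2 h2A)
      (Walk.end_mem_support _)
    apply this
    have : W u2 h2A = W u1 h1A := by
      rw [← hEdef u1 h1A, ← hEdef u2 h2A, heq]
    rw [this]
    exact Walk.end_mem_support _
  -- counting
  have h1 : (cov M' : Finset V).card = 2 * M'.card := card_cov hM'
  have h2 : (cov M : Finset V).card = 2 * M.card := card_cov hM
  have h3 : A.card + (cov M' ∩ cov M).card = (cov M').card := by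
    rw [hAdef]; exact Finset.card_sdiff_add_card_inter _ _
  have h4 : C.card + B.card = A.card := by
    rw [hCdef]; exact Finset.card_sdiff_add_card_eq_card hBA
  have h5 : (cov M \ cov M').card + S.card = (cov M).card := by
    rw [hSdef]; exact Finset.card_sdiff_add_card_inter _ _
  have h8 : (cov M' ∩ cov M).card = S.card := by rw [hSdef, Finset.inter_comm]
  have h6 : C.card ≤ (cov M \ cov M').card :=
    Finset.card_le_card_of_injOn E hCmaps hCinj
  -- the sum bound
  have h7 : 2 * k * B.card ≤ 2 * S.card := by
    have hsum1 : B.card * (2 * k) ≤ ∑ u ∈ B, (I u).card := by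
      have := Finset.card_nsmul_le_sum B (fun u => (I u).card) (2 * k) hIcard
      simpa [smul_eq_mul] using this
    have hsum2 : ∑ u ∈ B, (I u).card ≤ 2 * S.card := by
      have hrw : ∀ u ∈ B, (I u).card = ∑ x ∈ S, (if x ∈ I u then 1 else 0) := by
        intro u huB
        rw [← Finset.card_filter]
        congr 1
        ext x
        simp only [Finset.mem_filter]
        exact ⟨fun h => ⟨hIS u (hBA huB) h, h⟩, fun h => h.2⟩
      rw [Finset.sum_congr rfl hrw, Finset.sum_comm]
      have hinner : ∀ x ∈ S, (∑ u ∈ B, if x ∈ I u then 1 else 0) ≤ 2 := by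
        intro x _
        rw [← Finset.card_filter]
        by_cases hne : (B.filter (fun u => x ∈ I u)).Nonempty
        · obtain ⟨u0, hu0⟩ := hne
          have hu0' := Finset.mem_filter.mp hu0
          have hsub : B.filter (fun u => x ∈ I u) ⊆ {u0, E u0} := by
            intro u huf
            have hu' := Finset.mem_filter.mp huf
            by_contra hnot
            simp only [Finset.mem_insert, Finset.mem_singleton, not_or] at hnot
            exact hdisj u0 (hBA hu0'.1) u (hBA hu'.1) hnot.1 hnot.2 x hu0'.2 hu'.2
          calc (B.filter (fun u => x ∈ I u)).card ≤ ({u0, E u0} : Finset V).card :=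
                Finset.card_le_card hsub
            _ ≤ 2 := by
                apply le_trans (Finset.card_insert_le _ _)
                simp
        · rw [Finset.not_nonempty_iff_eq_empty] at hne
          rw [hne]; simp
      calc ∑ x ∈ S, (∑ u ∈ B, if x ∈ I u then 1 else 0) ≤ ∑ x ∈ S, 2 :=
            Finset.sum_le_sum hinner
        _ = 2 * S.card := by rw [Finset.sum_const, smul_eq_mul, mul_comm]
    calc 2 * k * B.card = B.card * (2 * k) := by ring
      _ ≤ ∑ u ∈ B, (I u).card := hsum1
      _ ≤ 2 * S.card := hsum2
  have hkb : k * B.card ≤ S.card := by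
    have : 2 * (k * B.card) ≤ 2 * S.card := by
      calc 2 * (k * B.card) = 2 * k * B.card := by ring
        _ ≤ 2 * S.card := h7
    omega
  have hsle : S.card ≤ 2 * M.card := by omega
  have hfinal : 2 * (k * M'.card) ≤ 2 * ((k + 1) * M.card) := by
    have hkc : k * C.card ≤ k * (cov M \ cov M').card := Nat.mul_le_mul_left k h6
    calc 2 * (k * M'.card) = k * (2 * M'.card) := by ring
      _ = k * (A.card + S.card) := by rw [← h1, ← h3, h8]
      _ = k * C.card + k * B.card + k * S.card := by rw [← h4]; ring
      _ ≤ k * (cov M \ cov M').card + S.card + k * S.card := by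
          exact add_le_add (add_le_add hkc hkb) le_rfl
      _ = k * ((cov M \ cov M').card + S.card) + S.card := by ring
      _ = k * (2 * M.card) + S.card := by rw [h5, h2]
      _ ≤ k * (2 * M.card) + 2 * M.card := add_le_add le_rfl hsle
      _ = 2 * ((k + 1) * M.card) := by ring
  omega
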